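/- Let A = {a₁ < a₂ < ... < a_k} ⊂ ℕ with k ≥ 2. Every complete word on A (containing every permutation of the elements of A as a subsequence) contains a regular occurrence of every preferential arrangement of length k. -/

import Mathlib

/-- `p` is a preferential arrangement of length `k` in dense-ranking form:
a string of length `k` whose positive entries form an initial segment of ℕ≥1. -/
def IsPrefArrangement (k : ℕ) (p : List ℕ) : Prop :=
  p.length = k ∧ (∀ x ∈ p, 1 ≤ x) ∧ (∀ x ∈ p, ∀ y, 1 ≤ y → y ≤ x → y ∈ p)

/-- A regular occurrence of the preferential arrangement `p` in the word `w` over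
the ordered alphabet `a 1 < a 2 < ... < a k`: an order-isomorphic occurrence of `p`
as a subsequence such that each letter `c` of `p`, having `i` letters of `p` below
it and `j` copies in `p`, is represented by some element of `{a (i+1), ..., a (i+j)}`. -/
def RegularOcc (a : ℕ → ℕ) (p w : List ℕ) : Prop :=
  ∃ v : List ℕ, v.Sublist w ∧ ∃ h : p.length = v.length,
    (∀ i j : Fin p.length,
      p.get i < p.get j ↔ v.get (Fin.cast h i) < v.get (Fin.cast h j)) ∧
    ∀ m : Fin p.length, ∃ t : ℕ,
      (p.filter fun x => x < p.get m).length < t ∧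
      t ≤ (p.filter fun x => x < p.get m).length + p.count (p.get m) ∧
      v.get (Fin.cast h m) = a t



namespace CompleteWordAux

/-- `w` is complete for alphabet `A`: every duplicate-free enumeration of `A`
is a sublist of `w`. -/
def Comp (A : Finset ℕ) (w : List ℕ) : Prop :=
  ∀ l : List ℕ, l.Nodup → (∀ x ∈ l, x ∈ A) → l.length = A.card → l.Sublist w

theorem mem_of_comp {A : Finset ℕ} {w : List ℕ} (h : Comp A w) {x : ℕ} (hx : x ∈ A) :
    x ∈ w := by
  have hcard : 1 ≤ A.card := Finset.card_pos.mpr ⟨x, hx⟩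
  have hl : (x :: (A.erase x).toList).Sublist w := by
    apply h
    · exact List.nodup_cons.mpr ⟨by simp [Finset.mem_toList], (A.erase x).nodup_toList⟩
    · intro y hy
      rcases List.mem_cons.mp hy with rfl | hy
      · exact hx
      · exact Finset.mem_of_mem_erase (Finset.mem_toList.mp hy)
    · simp only [List.length_cons, Finset.length_toList, Finset.card_erase_of_mem hx]
      omega
  exact hl.subset (List.mem_cons_self)

theorem tail_sublist_drop {a : ℕ} {l : List ℕ} :
    ∀ {w : List ℕ}, (a :: l).Sublist w → l.Sublist (w.drop (w.idxOf a + 1)) := by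
  intro w
  induction w with
  | nil => intro h; exact absurd h (by simp)
  | cons b w' ih =>
    intro h
    by_cases hba : b = a
    · subst hba
      rw [List.idxOf_cons_self, List.drop_succ_cons, List.drop_zero]
      cases h with
      | cons _ h' => exact (List.sublist_cons_self _ _).trans h'
      | cons_cons _ h' => exact h'
    · have hh : (a :: l).Sublist w' := by
        cases h with
        | cons _ h' => exact h'
        | cons_cons _ h' => exact absurd rfl hba
      rw [List.idxOf_cons_ne _ hba, Nat.succ_eq_add_one, List.drop_succ_cons]
      exact ih hh

theorem cons_sublist_splice {r : ℕ} {w l : List ℕ} {m : ℕ} (hrw : r ∈ w)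
    (hlt : w.idxOf r < m) (hl : l.Sublist (w.drop m)) : (r :: l).Sublist w := by
  have hi : w.idxOf r < w.length := List.idxOf_lt_length_iff.mpr hrw
  have h1 : r ∈ w.take m := by
    have hlen : w.idxOf r < (w.take m).length := by
      rw [List.length_take]; omega
    have : (w.take m)[w.idxOf r]'hlen = r := by
      rw [List.getElem_take]
      exact List.getElem_idxOf hi
    exact this ▸ List.getElem_mem hlen
  have h2 : ([r] ++ l).Sublist (w.take m ++ w.drop m) :=
    List.Sublist.append (List.singleton_sublist.mpr h1) hl
  rwa [List.take_append_drop, List.singleton_append] at h2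

theorem comp_erase_drop {A : Finset ℕ} {w : List ℕ} (h : Comp A w) {x : ℕ} (hx : x ∈ A) :
    Comp (A.erase x) (w.drop (w.idxOf x + 1)) := by
  intro l hnd hmem hlen
  have hcard : 1 ≤ A.card := Finset.card_pos.mpr ⟨x, hx⟩
  have hxl : x ∉ l := fun hxl => by simpa using hmem x hxl
  have h2 : (x :: l).Sublist w := by
    apply h
    · exact List.nodup_cons.mpr ⟨hxl, hnd⟩
    · intro y hy
      rcases List.mem_cons.mp hy with rfl | hy
      · exact hx
      · exact Finset.mem_of_mem_erase (hmem y hy)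
    · rw [List.length_cons, hlen, Finset.card_erase_of_mem hx]
      omega
  exact tail_sublist_drop h2

theorem core : ∀ (p : List ℕ) (A : Finset ℕ) (B : ℕ → Finset ℕ) (w : List ℕ),
    Comp A w →
    (∀ c ∈ p, (B c).card = p.count c) →
    (∀ c ∈ p, ∀ c' ∈ p, c ≠ c' → Disjoint (B c) (B c')) →
    A = p.toFinset.biUnion B →
    ∃ g : ℕ → ℕ, (∀ c ∈ p, g c ∈ B c) ∧ (p.map g).Sublist w := by
  intro p
  induction p with
  | nil => exact fun A B w _ _ _ _ => ⟨fun _ => 0, by simp, by simp⟩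
  | cons c p' ih =>
    intro A B w hcomp hcard hdisj hun
    classical
    have hcB : (B c).card = (c :: p').count c := hcard c (List.mem_cons_self)
    have hcnt : (c :: p').count c = p'.count c + 1 := List.count_cons_self
    have hBne : (B c).Nonempty := by
      apply Finset.card_pos.mp; omega
    obtain ⟨xh, hxhB, hxhmax⟩ := Finset.exists_max_image (B c) (fun y => w.idxOf y) hBne
    have hxhA : xh ∈ A := by
      rw [hun]; exact Finset.mem_biUnion.mpr ⟨c, by simp, hxhB⟩
    have hcomp₂ : Comp (A.erase xh) (w.drop (w.idxOf xh + 1)) := comp_erase_drop hcomp hxhA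
    set B' := Function.update B c ((B c).erase xh) with hB'
    have hB'sub : ∀ e, B' e ⊆ B e := by
      intro e
      by_cases hec : e = c
      · subst hec; rw [hB', Function.update_self]; exact Finset.erase_subset _ _
      · rw [hB', Function.update_of_ne hec]
    have hcard' : ∀ d ∈ p', (B' d).card = p'.count d := by
      intro d hd
      by_cases hdc : d = c
      · subst hdc
        rw [hB', Function.update_self, Finset.card_erase_of_mem hxhB]
        omega
      · rw [hB', Function.update_of_ne hdc]
        have h1 := hcard d (List.mem_cons_of_mem _ hd)
        rwa [List.count_cons_of_ne (Ne.symm hdc)] at h1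
    have hdisj' : ∀ d ∈ p', ∀ d' ∈ p', d ≠ d' → Disjoint (B' d) (B' d') := by
      intro d hd d' hd' hne
      exact (hdisj d (List.mem_cons_of_mem _ hd) d' (List.mem_cons_of_mem _ hd') hne).mono
        (hB'sub d) (hB'sub d')
    have hxhnotother : ∀ d, d ∈ (c :: p') → d ≠ c → xh ∉ B d := by
      intro d hd hdc hmem
      exact Finset.disjoint_left.mp
        (hdisj c (List.mem_cons_self) d hd (fun h => hdc h.symm)) hxhB hmem
    have hun' : A.erase xh = p'.toFinset.biUnion B' := by
      ext t
      simp only [Finset.mem_erase, Finset.mem_biUnion, List.mem_toFinset]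
      constructor
      · rintro ⟨htx, htA⟩
        rw [hun] at htA
        obtain ⟨d, hd, htd⟩ := Finset.mem_biUnion.mp htA
        rw [List.mem_toFinset] at hd
        by_cases hdc : d = c
        · subst hdc
          have h2 : 1 < (B d).card := Finset.one_lt_card.mpr ⟨t, htd, xh, hxhB, htx⟩
          have hcp' : d ∈ p' := by
            by_contra hc
            have : p'.count d = 0 := List.count_eq_zero.mpr hc
            omega
          refine ⟨d, hcp', ?_⟩
          rw [hB', Function.update_self, Finset.mem_erase]
          exact ⟨htx, htd⟩
        · have hd' : d ∈ p' := by
            rcases List.mem_cons.mp hd with h | h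
            · exact absurd h hdc
            · exact h
          refine ⟨d, hd', ?_⟩
          rw [hB', Function.update_of_ne hdc]
          exact htd
      · rintro ⟨d, hd, htd⟩
        have htBd : t ∈ B d := hB'sub d htd
        constructor
        · by_cases hdc : d = c
          · subst hdc
            rw [hB', Function.update_self, Finset.mem_erase] at htd
            exact htd.1
          · intro hte
            subst hte
            exact hxhnotother d (List.mem_cons_of_mem _ hd) hdc htBd
        · rw [hun]
          exact Finset.mem_biUnion.mpr ⟨d, by simp [hd], htBd⟩
    obtain ⟨g, hg, hgsub⟩ := ih (A.erase xh) B' (w.drop (w.idxOf xh + 1))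
      hcomp₂ hcard' hdisj' hun'
    obtain ⟨r, hrBc, hrw, hrle, hgc⟩ :
        ∃ r, r ∈ B c ∧ r ∈ w ∧ w.idxOf r ≤ w.idxOf xh ∧ (c ∈ p' → g c = r) := by
      by_cases hcp' : c ∈ p'
      · have hgc' := hg c hcp'
        rw [hB', Function.update_self] at hgc'
        have hrmem : g c ∈ B c := Finset.mem_of_mem_erase hgc'
        have hrA : g c ∈ A := by
          rw [hun]; exact Finset.mem_biUnion.mpr ⟨c, by simp, hrmem⟩
        exact ⟨g c, hrmem, mem_of_comp hcomp hrA, hxhmax _ hrmem, fun _ => rfl⟩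
      · exact ⟨xh, hxhB, mem_of_comp hcomp hxhA, le_refl _, fun hc => absurd hc hcp'⟩
    refine ⟨Function.update g c r, ?_, ?_⟩
    · intro d hd
      by_cases hdc : d = c
      · subst hdc; rw [Function.update_self]; exact hrBc
      · rw [Function.update_of_ne hdc]
        have hd' : d ∈ p' := by
          rcases List.mem_cons.mp hd with h | h
          · exact absurd h hdc
          · exact h
        have := hg d hd'
        rwa [hB', Function.update_of_ne hdc] at this
    · rw [List.map_cons, Function.update_self]
      have hmapeq : p'.map (Function.update g c r) = p'.map g := by
        apply List.map_congr_left
        intro d hd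
        by_cases hdc : d = c
        · subst hdc; rw [Function.update_self, hgc hd]
        · exact Function.update_of_ne hdc _ _
      rw [hmapeq]
      exact cons_sublist_splice hrw (by omega) hgsub

end CompleteWordAux

namespace CompleteWordAux

theorem filter_le_split (c : ℕ) : ∀ l : List ℕ,
    (l.filter (fun x => x ≤ c)).length = (l.filter (fun x => x < c)).length + l.count c
  | [] => by simp
  | b :: l => by
    have ih := filter_le_split c l
    by_cases h1 : b ≤ c
    · by_cases h2 : b < c
      · have h3 : ¬ (b = c) := by omega
        simp [List.filter_cons, List.count_cons, h1, h2, h3, ih]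
        omega
      · have h3 : b = c := by omega
        simp [List.filter_cons, List.count_cons, h1, h2, h3, ih]
        omega
    · have h2 : ¬ b < c := by omega
      have h3 : ¬ (b = c) := by omega
      simp [List.filter_cons, List.count_cons, h1, h2, h3, ih]

end CompleteWordAux
/-- Every complete word on `A = {a 1 < ... < a k}` (k ≥ 2) contains a regular
occurrence of every preferential arrangement of length k. -/
theorem complete_word_has_regular_occurrences (k : ℕ) (hk : 2 ≤ k) (a : ℕ → ℕ)
    (ha : ∀ i j, 1 ≤ i → i < j → j ≤ k → a i < a j)
    (w : List ℕ) (halph : ∀ x ∈ w, ∃ t, 1 ≤ t ∧ t ≤ k ∧ x = a t)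
    (hcomplete : ∀ σ : Equiv.Perm (Fin k),
      (List.ofFn fun i => a ((σ i : ℕ) + 1)).Sublist w)
    (p : List ℕ) (hp : IsPrefArrangement k p) :
    RegularOcc a p w := by
  classical
  obtain ⟨hlen, hpos, hdense⟩ := hp
  have hainj : ∀ s t : ℕ, 1 ≤ s → s ≤ k → 1 ≤ t → t ≤ k → a s = a t → s = t := by
    intro s t hs hsk ht htk he
    rcases lt_trichotomy s t with h | h | h
    · exact absurd he (ne_of_lt (ha s t hs h htk))
    · exact h
    · exact absurd he.symm (ne_of_lt (ha t s ht h hsk))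
  set A : Finset ℕ := (Finset.Icc 1 k).image a with hA
  have hcardA : A.card = k := by
    rw [hA, Finset.card_image_of_injOn, Nat.card_Icc]
    · omega
    · intro s hs t ht he
      rw [Finset.coe_Icc, Set.mem_Icc] at hs ht
      exact hainj s t hs.1 hs.2 ht.1 ht.2 he
  have hcomp : CompleteWordAux.Comp A w := by
    intro l hnd hmem hlenl
    rw [hcardA] at hlenl
    have hget : ∀ i : Fin k, ∃ t, 1 ≤ t ∧ t ≤ k ∧ l.get (Fin.cast hlenl.symm i) = a t := by
      intro i
      have hmem' : l.get (Fin.cast hlenl.symm i) ∈ A := by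
        apply hmem
        rw [List.get_eq_getElem]
        exact List.getElem_mem _
      rw [hA, Finset.mem_image] at hmem'
      obtain ⟨t, htm, hte⟩ := hmem'
      rw [Finset.mem_Icc] at htm
      exact ⟨t, htm.1, htm.2, hte.symm⟩
    choose tf htf1 htf2 htf3 using hget
    have hbij : Function.Bijective (fun i : Fin k =>
        (⟨tf i - 1, by have h1 := htf1 i; have h2 := htf2 i; omega⟩ : Fin k)) := by
      rw [← Finite.injective_iff_bijective]
      intro i i' he
      simp only [Fin.mk.injEq] at he
      have h1 := htf1 i
      have h1' := htf1 i'
      have h2 : tf i = tf i' := by omega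
      have h3 : l.get (Fin.cast hlenl.symm i) = l.get (Fin.cast hlenl.symm i') := by
        rw [htf3, htf3, h2]
      have h4 := List.nodup_iff_injective_get.mp hnd h3
      have h5 := congrArg Fin.val h4
      simp only [Fin.coe_cast] at h5
      exact Fin.ext h5
    have hfin := hcomplete (Equiv.ofBijective _ hbij)
    have hleq : l = List.ofFn (fun i : Fin k => a (((Equiv.ofBijective _ hbij) i : ℕ) + 1)) := by
      apply List.ext_getElem
      · simp [hlenl]
      · intro n h1 h2
        have hnk : n < k := by omega
        have h4 : l[n]'h1 = a (tf ⟨n, hnk⟩) := by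
          rw [← htf3 ⟨n, hnk⟩]
          simp [List.get_eq_getElem, Fin.coe_cast]
        rw [List.getElem_ofFn, h4]
        show a (tf ⟨n, hnk⟩) = a (tf ⟨n, hnk⟩ - 1 + 1)
        exact congrArg a (by have := htf1 (⟨n, hnk⟩ : Fin k); omega)
    rw [hleq]
    exact hfin
  have hsplit : ∀ c : ℕ, (p.filter (fun x => x ≤ c)).length
      = (p.filter (fun x => x < c)).length + p.count c :=
    fun c => CompleteWordAux.filter_le_split c p
  set B : ℕ → Finset ℕ := fun c =>
    (Finset.Icc ((p.filter (fun x => x < c)).length + 1)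
      ((p.filter (fun x => x < c)).length + p.count c)).image a with hB
  have hbound : ∀ c ∈ p, (p.filter (fun x => x < c)).length + p.count c ≤ k := by
    intro c hc
    rw [← hsplit c, ← hlen]
    exact List.length_filter_le _ _
  have hmono : ∀ c c' : ℕ, c < c' →
      (p.filter (fun x => x < c)).length + p.count c ≤ (p.filter (fun x => x < c')).length := by
    intro c c' hcc
    rw [← hsplit c]
    have hsub : (p.filter (fun x => x ≤ c)).Sublist (p.filter (fun x => x < c')) := by
      apply List.monotone_filter_right
      intro x hx
      simp only [decide_eq_true_eq] at hx ⊢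
      omega
    exact hsub.length_le
  have hBmem : ∀ c : ℕ, ∀ y ∈ B c, ∃ t, (p.filter (fun x => x < c)).length + 1 ≤ t ∧
      t ≤ (p.filter (fun x => x < c)).length + p.count c ∧ y = a t := by
    intro c y hy
    simp only [hB] at hy
    obtain ⟨t, htm, hte⟩ := Finset.mem_image.mp hy
    rw [Finset.mem_Icc] at htm
    exact ⟨t, htm.1, htm.2, hte.symm⟩
  have hcardB : ∀ c ∈ p, (B c).card = p.count c := by
    intro c hc
    simp only [hB]
    rw [Finset.card_image_of_injOn, Nat.card_Icc]
    · omega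
    · intro s hs t' ht' he
      rw [Finset.coe_Icc, Set.mem_Icc] at hs ht'
      have := hbound c hc
      exact hainj _ _ (by omega) (by omega) (by omega) (by omega) he
  have hdisjkey : ∀ c ∈ p, ∀ c' ∈ p, c < c' → Disjoint (B c) (B c') := by
    intro c hc c' hc' hcc
    rw [Finset.disjoint_left]
    intro y hy hy'
    obtain ⟨t, ht1, ht2, hte⟩ := hBmem c y hy
    obtain ⟨t', ht1', ht2', hte'⟩ := hBmem c' y hy'
    have h1 := hbound c' hc'
    have h2 := hmono c c' hcc
    have h3 := hbound c hc
    have h4 : t = t' := hainj t t' (by omega) (by omega) (by omega) (by omega)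
      (hte.symm.trans hte')
    omega
  have hdisjB : ∀ c ∈ p, ∀ c' ∈ p, c ≠ c' → Disjoint (B c) (B c') := by
    intro c hc c' hc' hne
    rcases lt_or_gt_of_ne hne with h | h
    · exact hdisjkey c hc c' hc' h
    · exact (hdisjkey c' hc' c hc h).symm
  have hvk : ∀ x ∈ p, x ≤ k := by
    intro x hx
    have hsub : Finset.Icc 1 x ⊆ p.toFinset := by
      intro y hy
      rw [Finset.mem_Icc] at hy
      exact List.mem_toFinset.mpr (hdense x hx y hy.1 hy.2)
    have h1 := Finset.card_le_card hsub
    rw [Nat.card_Icc] at h1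
    have h2 := List.toFinset_card_le p
    omega
  have hunion : A = p.toFinset.biUnion B := by
    apply Finset.Subset.antisymm
    · intro y hy
      rw [hA, Finset.mem_image] at hy
      obtain ⟨t, htm, hte⟩ := hy
      rw [Finset.mem_Icc] at htm
      have hex : ∃ c, t ≤ (p.filter (fun x => x ≤ c)).length := by
        refine ⟨k, ?_⟩
        have hfe : p.filter (fun x => x ≤ k) = p :=
          List.filter_eq_self.mpr (fun x hx => by
            simp only [decide_eq_true_eq]
            exact hvk x hx)
        rw [hfe, hlen]
        exact htm.2
      have hspec : t ≤ (p.filter (fun x => x ≤ Nat.find hex)).length := Nat.find_spec hex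
      have hc₀pos : 1 ≤ Nat.find hex := by
        by_contra hcon
        have hc00 : Nat.find hex = 0 := by omega
        have hnil : p.filter (fun x => x ≤ 0) = [] := by
          rw [List.filter_eq_nil_iff]
          intro x hx
          have := hpos x hx
          simp only [decide_eq_true_eq]
          omega
        rw [hc00, hnil] at hspec
        simp at hspec
        omega
      have hmin : ¬ t ≤ (p.filter (fun x => x ≤ Nat.find hex - 1)).length :=
        Nat.find_min hex (by omega)
      have hlteq : p.filter (fun x => x < Nat.find hex)
          = p.filter (fun x => x ≤ Nat.find hex - 1) := by
        apply List.filter_congr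
        intro x hx
        simp only [decide_eq_decide]
        omega
      have hs := hsplit (Nat.find hex)
      have hc₀p : Nat.find hex ∈ p := by
        by_contra hcon
        have hcnt : p.count (Nat.find hex) = 0 := List.count_eq_zero.mpr hcon
        rw [hcnt, hlteq] at hs
        omega
      apply Finset.mem_biUnion.mpr
      refine ⟨Nat.find hex, List.mem_toFinset.mpr hc₀p, ?_⟩
      simp only [hB]
      apply Finset.mem_image.mpr
      refine ⟨t, ?_, hte⟩
      rw [Finset.mem_Icc, hlteq]
      rw [hlteq] at hs
      omega
    · intro y hy
      obtain ⟨c, hcmem, hyc⟩ := Finset.mem_biUnion.mp hy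
      rw [List.mem_toFinset] at hcmem
      obtain ⟨t, ht1, ht2, hte⟩ := hBmem c y hyc
      rw [hA, Finset.mem_image]
      refine ⟨t, ?_, hte.symm⟩
      rw [Finset.mem_Icc]
      have := hbound c hcmem
      omega
  obtain ⟨g, hg, hgsub⟩ := CompleteWordAux.core p A B w hcomp hcardB hdisjB hunion
  have hgetmem : ∀ m : Fin p.length, p.get m ∈ p := by
    intro m
    rw [List.get_eq_getElem]
    exact List.getElem_mem _
  have hkey : ∀ c ∈ p, ∀ c' ∈ p, c < c' → g c < g c' := by
    intro c hc c' hc' hlt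
    obtain ⟨t, ht1, ht2, hte⟩ := hBmem c (g c) (hg c hc)
    obtain ⟨t', ht1', ht2', hte'⟩ := hBmem c' (g c') (hg c' hc')
    rw [hte, hte']
    have h1 := hbound c' hc'
    have h2 := hmono c c' hlt
    exact ha t t' (by omega) (by omega) (by omega)
  have hlv : p.length = (p.map g).length := by simp
  have hv : ∀ m : Fin p.length, (p.map g).get (Fin.cast hlv m) = g (p.get m) := by
    intro m
    simp [List.get_eq_getElem, List.getElem_map, Fin.coe_cast]
  refine ⟨p.map g, hgsub, hlv, ?_, ?_⟩
  · intro i j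
    rw [hv i, hv j]
    constructor
    · intro h1
      exact hkey _ (hgetmem i) _ (hgetmem j) h1
    · intro h1
      rcases lt_trichotomy (p.get i) (p.get j) with h2 | h2 | h2
      · exact h2
      · rw [h2] at h1
        exact absurd h1 (lt_irrefl _)
      · have := hkey _ (hgetmem j) _ (hgetmem i) h2
        omega
  · intro m
    obtain ⟨t, ht1, ht2, hte⟩ := hBmem (p.get m) (g (p.get m)) (hg _ (hgetmem m))
    refine ⟨t, by omega, by omega, ?_⟩
    rw [hv m]
    exact hte
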